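/- Let M^c = collapse(M, MECs(M), ŝ, T) be the collapsed MDP of M where the collapsed set of ECs consists of all maximal end components of M. Then the only maximal end components of M^c are ({s_+}, {a_+}) and ({s_-}, {a_-}); in particular M^c has no end component other than the two trivial terminal ones. -/

import Mathlib

/-!
STATEMENT 6: If the collapsed set of ECs consists of all maximal end components
of M, then the only MECs of the collapsed MDP M^c are ({s₊},{a₊}) and ({s₋},{a₋});
in particular M^c has no end component other than these two trivial terminal
ones.
-/

open Finset
open scoped Classical

/-- A finite MDP with per-state disjoint action sets: `stOf` assigns to every
action the unique state at which it is available. -/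
structure MDP (S A : Type) [Fintype S] [DecidableEq S] [Fintype A] [DecidableEq A] where
  act : S → Finset A
  act_ne : ∀ s, (act s).Nonempty
  stOf : A → S
  stOf_spec : ∀ s a, a ∈ act s → stOf a = s
  P : S → A → S → ℝ
  P_nonneg : ∀ s a s', 0 ≤ P s a s'
  P_sum : ∀ s, ∀ a ∈ act s, ∑ s', P s a s' = 1

/-- A finite path of length `N`: states `st 0, …, st N` and actions
`ac 0, …, ac (N−1)`, each action available and each transition of positive
probability. -/
def IsPath {σ α : Type*} (act : σ → Finset α) (P : σ → α → σ → ℝ)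
    (N : ℕ) (st : ℕ → σ) (ac : ℕ → α) : Prop :=
  ∀ k, k < N → ac k ∈ act (st k) ∧ 0 < P (st k) (ac k) (st (k + 1))

/-- One step inside the sub-system `(R, B)`. -/
def stepIn {σ α : Type*} (act : σ → Finset α) (P : σ → α → σ → ℝ)
    (R : Finset σ) (B : Finset α) (x y : σ) : Prop :=
  x ∈ R ∧ y ∈ R ∧ ∃ a ∈ B, a ∈ act x ∧ 0 < P x a y

/-- End component. -/
def IsEC {σ α : Type*} (act : σ → Finset α) (P : σ → α → σ → ℝ)
    (R : Finset σ) (B : Finset α) : Prop :=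
  R.Nonempty ∧ B.Nonempty ∧
  (∀ a ∈ B, ∃ s ∈ R, a ∈ act s) ∧
  (∀ s ∈ R, ∀ a ∈ B, a ∈ act s → ∀ s', 0 < P s a s' → s' ∈ R) ∧
  (∀ s ∈ R, ∀ s' ∈ R, Relation.ReflTransGen (stepIn act P R B) s s')

/-- Maximal end component. -/
def IsMEC {σ α : Type*} (act : σ → Finset α) (P : σ → α → σ → ℝ)
    (R : Finset σ) (B : Finset α) : Prop :=
  IsEC act P R B ∧
  ∀ R' B', IsEC act P R' B' → R ⊆ R' → B ⊆ B' → R = R' ∧ B = B'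

/-- The state space of the collapsed MDP (before restricting to valid states):
original states, representative states `s_{(R_i,B_i)}` (one per collapsed EC), and
the two fresh states `s₊` (`Sum.inr true`) and `s₋` (`Sum.inr false`). -/
abbrev CS (S : Type) (n : ℕ) : Type := (S ⊕ Fin n) ⊕ Bool

/-- The action alphabet of the collapsed MDP: original actions, the `rem_i`
actions (one per collapsed EC), and the self-loop actions `a₊` (`Sum.inr true`)
and `a₋` (`Sum.inr false`). -/
abbrev CA (A : Type) (n : ℕ) : Type := (A ⊕ Fin n) ⊕ Bool

variable {S A : Type} [Fintype S] [DecidableEq S] [Fintype A] [DecidableEq A] {n : ℕ}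

/-- A collapsed state is valid if it is not an original state belonging to one of
the collapsed ECs. -/
def Valid (R : Fin n → Finset S) (x : CS S n) : Prop :=
  ∀ s : S, x = Sum.inl (Sum.inl s) → ∀ i, s ∉ R i

instance {R : Fin n → Finset S} : DecidablePred (Valid R) := fun x =>
  inferInstanceAs (Decidable (∀ s : S, x = Sum.inl (Sum.inl s) → ∀ i, s ∉ R i))

/-- The state space `S^c` of the collapsed MDP. -/
abbrev CSv (R : Fin n → Finset S) : Type _ := {x : CS S n // Valid R x}

/-- `states(s^c)`: the set of original states represented by a collapsed state. -/
def statesOf (R : Fin n → Finset S) : CS S n → Finset S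
  | Sum.inl (Sum.inl s) => {s}
  | Sum.inl (Sum.inr i) => R i
  | Sum.inr _ => ∅

/-- The map `collapsed : S → S^c`, sending a state to its representative if it
belongs to a collapsed EC and to itself otherwise. -/
noncomputable def collapseV (R : Fin n → Finset S) (s : S) : CSv R :=
  if h : ∃ i, s ∈ R i then
    ⟨Sum.inl (Sum.inr (Classical.choose h)), by intro t ht; simp at ht⟩
  else
    ⟨Sum.inl (Sum.inl s), by
      intro t ht i hi
      simp only [Sum.inl.injEq] at ht
      subst ht
      exact h ⟨i, hi⟩⟩

/-- The terminal states `s₊ = term R true` and `s₋ = term R false` of the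
collapsed MDP. -/
def term (R : Fin n → Finset S) (b : Bool) : CSv R :=
  ⟨Sum.inr b, by intro t ht; simp at ht⟩

/-- The representative state `s_{(R_i,B_i)}` of the `i`-th collapsed EC. -/
def repV (R : Fin n → Finset S) (i : Fin n) : CSv R :=
  ⟨Sum.inl (Sum.inr i), by intro t ht; simp at ht⟩

/-- The available actions `A^c` of the collapsed MDP. -/
noncomputable def cAct (M : MDP S A) (R : Fin n → Finset S) (B : Fin n → Finset A) :
    CSv R → Finset (CA A n) := fun x =>
  match x.1 with
  | Sum.inl (Sum.inl s) => (M.act s).image fun a => Sum.inl (Sum.inl a)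
  | Sum.inl (Sum.inr i) =>
      insert (Sum.inl (Sum.inr i))
        (((R i).biUnion M.act \ B i).image fun a => Sum.inl (Sum.inl a))
  | Sum.inr b => {Sum.inr b}

/-- The transition function `Δ^c` of the collapsed MDP: an original action keeps
its distribution (aggregated over the represented states), `rem_i` moves to `s₊`
or `s₋` according to whether the `i`-th EC contains a target state, and `a₊`, `a₋`
are self-loops. -/
noncomputable def cP (M : MDP S A) (R : Fin n → Finset S) (T : Finset S) :
    CSv R → CA A n → CSv R → ℝ := fun _x a y =>
  match a with
  | Sum.inl (Sum.inl a₀) => ∑ s' ∈ statesOf R y.1, M.P (M.stOf a₀) a₀ s'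
  | Sum.inl (Sum.inr i) =>
      if (R i ∩ T).Nonempty then (if y = term R true then 1 else 0)
      else (if y = term R false then 1 else 0)
  | Sum.inr b => if y = term R b then 1 else 0



/-! ### Auxiliary lemmas -/

@[simp] lemma statesOf_orig (R : Fin n → Finset S) (s : S) :
    statesOf R (Sum.inl (Sum.inl s)) = {s} := rfl

@[simp] lemma statesOf_rep (R : Fin n → Finset S) (i : Fin n) :
    statesOf R (Sum.inl (Sum.inr i)) = R i := rfl

@[simp] lemma statesOf_term (R : Fin n → Finset S) (b : Bool) :
    statesOf R (Sum.inr b) = ∅ := rfl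

lemma stepIn_mono {σ α : Type*} {act : σ → Finset α} {P : σ → α → σ → ℝ}
    {R R' : Finset σ} {B B' : Finset α} (hR : R ⊆ R') (hB : B ⊆ B')
    {x y : σ} (h : stepIn act P R B x y) : stepIn act P R' B' x y := by
  obtain ⟨hx, hy, a, haB, haA, hP⟩ := h
  exact ⟨hR hx, hR hy, a, hB haB, haA, hP⟩

lemma rtg_fixed {σ : Type*} {r : σ → σ → Prop} {x : σ}
    (hx : ∀ y, r x y → y = x) : ∀ {y}, Relation.ReflTransGen r x y → y = x := by
  intro y h
  induction h with
  | refl => rfl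
  | tail h1 h2 ih => rw [ih] at h2; exact hx _ h2

/-- Every end component is contained in a maximal end component. -/
lemma exists_mec_superset {σ α : Type} [Fintype σ] [DecidableEq σ] [Fintype α] [DecidableEq α]
    (act : σ → Finset α) (P : σ → α → σ → ℝ) (R : Finset σ) (B : Finset α)
    (h : IsEC act P R B) :
    ∃ R' B', IsMEC act P R' B' ∧ R ⊆ R' ∧ B ⊆ B' := by
  classical
  let F : Finset (Finset σ × Finset α) :=
    Finset.univ.filter (fun p => IsEC act P p.1 p.2 ∧ R ⊆ p.1 ∧ B ⊆ p.2)
  have hmem : (R, B) ∈ F := by simp [F, h]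
  obtain ⟨p, hpF, hmax⟩ := F.exists_max_image (fun p => p.1.card + p.2.card) ⟨_, hmem⟩
  simp only [F, Finset.mem_filter] at hpF
  refine ⟨p.1, p.2, ⟨hpF.2.1, ?_⟩, hpF.2.2.1, hpF.2.2.2⟩
  intro R' B' hEC' hR' hB'
  have hq : (R', B') ∈ F := by
    simp only [F, Finset.mem_filter]
    exact ⟨Finset.mem_univ _, hEC', hpF.2.2.1.trans hR', hpF.2.2.2.trans hB'⟩
  have h1 := Finset.card_le_card hR'
  have h2 := Finset.card_le_card hB'
  have h3 : R'.card + B'.card ≤ p.1.card + p.2.card := hmax _ hq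
  constructor <;> (apply Finset.eq_of_subset_of_card_le <;> first | assumption | omega)

lemma mem_cAct_orig (M : MDP S A) (R : Fin n → Finset S) (B : Fin n → Finset A)
    (x : CSv R) (a₀ : A) (h : Sum.inl (Sum.inl a₀) ∈ cAct M R B x) :
    ∃ s ∈ statesOf R x.1, a₀ ∈ M.act s ∧ ∀ i, x.1 = Sum.inl (Sum.inr i) → a₀ ∉ B i := by
  obtain ⟨x1, hv⟩ := x
  rcases x1 with (s | i) | b
  · simp only [cAct, Finset.mem_image] at h
    obtain ⟨a, ha, hae⟩ := h
    simp only [Sum.inl.injEq] at hae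
    subst hae
    exact ⟨s, Finset.mem_singleton_self s, ha, by intro i hi; simp at hi⟩
  · simp only [cAct, Finset.mem_insert] at h
    rcases h with h | h
    · exact absurd h (by simp)
    · rw [Finset.mem_image] at h
      obtain ⟨a, ha, hae⟩ := h
      simp only [Sum.inl.injEq] at hae
      subst hae
      rw [Finset.mem_sdiff, Finset.mem_biUnion] at ha
      obtain ⟨⟨s, hsR, hsa⟩, hnB⟩ := ha
      refine ⟨s, hsR, hsa, ?_⟩
      intro j hj
      simp only [Sum.inl.injEq, Sum.inr.injEq] at hj
      exact hj ▸ hnB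
  · simp [cAct] at h

lemma rem_mem_cAct (M : MDP S A) (R : Fin n → Finset S) (B : Fin n → Finset A)
    (x : CSv R) (i : Fin n) (h : (Sum.inl (Sum.inr i) : CA A n) ∈ cAct M R B x) :
    x = repV R i := by
  obtain ⟨x1, hv⟩ := x
  rcases x1 with (s | j) | b
  · simp [cAct] at h
  · simp only [cAct, Finset.mem_insert] at h
    rcases h with h | h
    · simp only [Sum.inl.injEq, Sum.inr.injEq] at h
      subst h; rfl
    · rw [Finset.mem_image] at h
      obtain ⟨a, -, hae⟩ := h
      simp at hae
  · simp [cAct] at h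

lemma inr_mem_cAct (M : MDP S A) (R : Fin n → Finset S) (B : Fin n → Finset A)
    (x : CSv R) (b : Bool) (h : (Sum.inr b : CA A n) ∈ cAct M R B x) :
    x = term R b := by
  obtain ⟨x1, hv⟩ := x
  rcases x1 with (s | j) | b'
  · simp [cAct] at h
  · simp only [cAct, Finset.mem_insert] at h
    rcases h with h | h
    · simp at h
    · rw [Finset.mem_image] at h
      obtain ⟨a, -, hae⟩ := h
      simp at hae
  · simp only [cAct, Finset.mem_singleton, Sum.inr.injEq] at h
    subst h; rfl

lemma cAct_term_eq (M : MDP S A) (R : Fin n → Finset S) (B : Fin n → Finset A) (b : Bool) :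
    cAct M R B (term R b) = {Sum.inr b} := rfl

lemma rem_mem_cAct_repV (M : MDP S A) (R : Fin n → Finset S) (B : Fin n → Finset A) (i : Fin n) :
    (Sum.inl (Sum.inr i) : CA A n) ∈ cAct M R B (repV R i) :=
  Finset.mem_insert_self _ _

lemma cP_orig_eq (M : MDP S A) (R : Fin n → Finset S) (T : Finset S)
    (x y : CSv R) (a₀ : A) :
    cP M R T x (Sum.inl (Sum.inl a₀)) y = ∑ s' ∈ statesOf R y.1, M.P (M.stOf a₀) a₀ s' := rfl

lemma cP_rem_eq (M : MDP S A) (R : Fin n → Finset S) (T : Finset S)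
    (x y : CSv R) (i : Fin n) :
    cP M R T x (Sum.inl (Sum.inr i)) y =
      if (R i ∩ T).Nonempty then (if y = term R true then 1 else 0)
      else (if y = term R false then 1 else 0) := rfl

lemma cP_inr_eq (M : MDP S A) (R : Fin n → Finset S) (T : Finset S)
    (x y : CSv R) (b : Bool) :
    cP M R T x (Sum.inr b) y = if y = term R b then 1 else 0 := rfl

/-- The auxiliary finset of original actions of `B i` attached to a representative. -/
def repB (B : Fin n → Finset A) : CS S n → Finset A
  | Sum.inl (Sum.inr i) => B i
  | _ => ∅

@[simp] lemma repB_rep (B : Fin n → Finset A) (i : Fin n) :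
    repB (S := S) B (Sum.inl (Sum.inr i)) = B i := rfl

/-- Collapsing all MECs yields an MDP whose only (maximal) end components are the
two trivial terminal ones. -/
theorem collapse_all_mecs_no_ec (M : MDP S A) (n : ℕ)
    (R : Fin n → Finset S) (B : Fin n → Finset A)
    (hMEC : ∀ i, IsMEC M.act M.P (R i) (B i))
    (hdisj : ∀ i j, i ≠ j → Disjoint (R i) (R j))
    (hall : ∀ R₀ B₀, IsMEC M.act M.P R₀ B₀ → ∃ i, R i = R₀ ∧ B i = B₀)
    (T : Finset S)
    (Mc : MDP (CSv R) (CA A n))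
    (Hact : ∀ x, Mc.act x = cAct M R B x)
    (HP : ∀ x a y, Mc.P x a y = cP M R T x a y) :
    (∀ (Rc : Finset (CSv R)) (Bc : Finset (CA A n)),
      IsMEC Mc.act Mc.P Rc Bc ↔
        (Rc = {term R true} ∧ Bc = {Sum.inr true}) ∨
        (Rc = {term R false} ∧ Bc = {Sum.inr false})) ∧
    (∀ (Rc : Finset (CSv R)) (Bc : Finset (CA A n)),
      IsEC Mc.act Mc.P Rc Bc →
        (Rc = {term R true} ∧ Bc = {Sum.inr true}) ∨
        (Rc = {term R false} ∧ Bc = {Sum.inr false})) := by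
  classical
  -- Main lemma: every EC of the collapsed MDP is one of the two terminal ones.
  have key : ∀ (Rc : Finset (CSv R)) (Bc : Finset (CA A n)),
      IsEC Mc.act Mc.P Rc Bc →
        (Rc = {term R true} ∧ Bc = {Sum.inr true}) ∨
        (Rc = {term R false} ∧ Bc = {Sum.inr false}) := by
    intro Rc Bc hEC
    obtain ⟨hRne, hBne, hAvail, hClose, hConn⟩ := hEC
    -- From a terminal state every step stays put.
    have hterm : ∀ (b : Bool) (y : CSv R),
        stepIn Mc.act Mc.P Rc Bc (term R b) y → y = term R b := by
      rintro b y ⟨-, -, a, haB, haAct, hP⟩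
      rw [Hact, cAct_term_eq, Finset.mem_singleton] at haAct
      subst haAct
      rw [HP, cP_inr_eq] at hP
      by_contra hne
      rw [if_neg hne] at hP
      exact lt_irrefl 0 hP
    by_cases hT : ∃ b : Bool, term R b ∈ Rc
    · -- terminal case
      obtain ⟨b, hb⟩ := hT
      have hRc : Rc = {term R b} := by
        refine Finset.eq_singleton_iff_unique_mem.2 ⟨hb, fun x hx => ?_⟩
        exact rtg_fixed (hterm b) (hConn _ hb x hx)
      have hBsub : ∀ a ∈ Bc, a = Sum.inr b := by
        intro a ha
        obtain ⟨x, hx, hxact⟩ := hAvail a ha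
        rw [hRc, Finset.mem_singleton] at hx
        subst hx
        rw [Hact, cAct_term_eq, Finset.mem_singleton] at hxact
        exact hxact
      have hBc : Bc = {Sum.inr b} := by
        obtain ⟨a, ha⟩ := hBne
        have := hBsub a ha
        subst this
        exact Finset.eq_singleton_iff_unique_mem.2 ⟨ha, hBsub⟩
      cases b
      · exact Or.inr ⟨hRc, hBc⟩
      · exact Or.inl ⟨hRc, hBc⟩
    · -- no terminal state in Rc : derive a contradiction
      exfalso
      -- Bc contains only original actions
      have hBorig : ∀ a ∈ Bc, ∃ a₀ : A, a = Sum.inl (Sum.inl a₀) := by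
        intro a ha
        rcases a with (a₀ | i) | b
        · exact ⟨a₀, rfl⟩
        · -- rem_i : leads to a terminal state in Rc, contradiction
          exfalso
          obtain ⟨x, hx, hxact⟩ := hAvail _ ha
          have hxact' := hxact
          rw [Hact] at hxact'
          have hxr := rem_mem_cAct M R B x i hxact'
          subst hxr
          by_cases hTi : (R i ∩ T).Nonempty
          · have hP : 0 < Mc.P (repV R i) (Sum.inl (Sum.inr i)) (term R true) := by
              rw [HP, cP_rem_eq, if_pos hTi, if_pos rfl]; norm_num
            exact hT ⟨true, hClose _ hx _ ha hxact _ hP⟩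
          · have hP : 0 < Mc.P (repV R i) (Sum.inl (Sum.inr i)) (term R false) := by
              rw [HP, cP_rem_eq, if_neg hTi, if_pos rfl]; norm_num
            exact hT ⟨false, hClose _ hx _ ha hxact _ hP⟩
        · exfalso
          obtain ⟨x, hx, hxact⟩ := hAvail _ ha
          rw [Hact] at hxact
          have := inr_mem_cAct M R B x b hxact
          subst this
          exact hT ⟨b, hx⟩
      -- every state of Rc represents a nonempty set of original states
      have hSNE : ∀ x ∈ Rc, (statesOf R x.1).Nonempty := by
        rintro ⟨x1, hv⟩ hx
        rcases x1 with (s | i) | b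
        · exact ⟨s, Finset.mem_singleton_self s⟩
        · exact (hMEC i).1.1
        · exact absurd hx (fun h => hT ⟨b, h⟩)
      -- project to an end component of M
      set R₀ : Finset S := Rc.biUnion (fun x => statesOf R x.1) with hR₀def
      set B₀ : Finset A :=
        (Finset.univ.filter fun a : A => Sum.inl (Sum.inl a) ∈ Bc) ∪
          Rc.biUnion (fun x => repB B x.1) with hB₀def
      have hmemR₀ : ∀ x ∈ Rc, ∀ s ∈ statesOf R x.1, s ∈ R₀ := by
        intro x hx s hs; exact Finset.mem_biUnion.2 ⟨x, hx, hs⟩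
      have hmemB₀l : ∀ a₀ : A, Sum.inl (Sum.inl a₀) ∈ Bc → a₀ ∈ B₀ := by
        intro a₀ h
        exact Finset.mem_union_left _ (Finset.mem_filter.2 ⟨Finset.mem_univ _, h⟩)
      have hmemB₀r : ∀ i : Fin n, repV R i ∈ Rc → ∀ a ∈ B i, a ∈ B₀ := by
        intro i hi a ha
        exact Finset.mem_union_right _ (Finset.mem_biUnion.2 ⟨repV R i, hi, ha⟩)
      -- Lemma A : connectivity inside one collapsed state
      have hA : ∀ x ∈ Rc, ∀ u ∈ statesOf R x.1, ∀ v ∈ statesOf R x.1,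
          Relation.ReflTransGen (stepIn M.act M.P R₀ B₀) u v := by
        rintro ⟨x1, hv⟩ hx u hu v hv'
        rcases x1 with (s | i) | b
        · simp only [statesOf_orig, Finset.mem_singleton] at hu hv'
          subst hu; subst hv'
          exact Relation.ReflTransGen.refl
        · have hRsub : R i ⊆ R₀ := fun t ht => hmemR₀ _ hx t ht
          have hBsub : B i ⊆ B₀ := fun a ha => hmemB₀r i hx a ha
          exact Relation.ReflTransGen.mono
            (fun a b h => stepIn_mono hRsub hBsub h) _ _ ((hMEC i).1.2.2.2.2 u hu v hv')
        · exact absurd hx (fun h => hT ⟨b, h⟩)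
      -- Lemma B : one collapsed step lifts to paths in M
      have hB : ∀ x y, stepIn Mc.act Mc.P Rc Bc x y →
          ∀ w ∈ statesOf R x.1, ∀ v ∈ statesOf R y.1,
          Relation.ReflTransGen (stepIn M.act M.P R₀ B₀) w v := by
        rintro x y ⟨hx, hy, a, haB, haAct, hP⟩ w hw v hv
        obtain ⟨a₀, rfl⟩ := hBorig a haB
        rw [Hact] at haAct
        obtain ⟨s₀, hs₀x, ha₀, -⟩ := mem_cAct_orig M R B x a₀ haAct
        have hst : M.stOf a₀ = s₀ := M.stOf_spec _ _ ha₀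
        rw [HP, cP_orig_eq, hst] at hP
        have hex : ∃ t ∈ statesOf R y.1, 0 < M.P s₀ a₀ t := by
          by_contra hcon
          push_neg at hcon
          have hz : ∑ t ∈ statesOf R y.1, M.P s₀ a₀ t = 0 :=
            Finset.sum_eq_zero fun t ht => le_antisymm (hcon t ht) (M.P_nonneg _ _ _)
          rw [hz] at hP
          exact lt_irrefl 0 hP
        obtain ⟨t, ht, hpt⟩ := hex
        have step1 : stepIn M.act M.P R₀ B₀ s₀ t :=
          ⟨hmemR₀ _ hx _ hs₀x, hmemR₀ _ hy _ ht, a₀, hmemB₀l a₀ haB, ha₀, hpt⟩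
        exact ((hA x hx w hw s₀ hs₀x).trans (Relation.ReflTransGen.single step1)).trans
          (hA y hy t ht v hv)
      -- the projected pair is an end component of M
      have hEC₀ : IsEC M.act M.P R₀ B₀ := by
        refine ⟨?_, ?_, ?_, ?_, ?_⟩
        · obtain ⟨x, hx⟩ := hRne
          obtain ⟨s, hs⟩ := hSNE x hx
          exact ⟨s, hmemR₀ x hx s hs⟩
        · obtain ⟨a, ha⟩ := hBne
          obtain ⟨a₀, rfl⟩ := hBorig a ha
          exact ⟨a₀, hmemB₀l a₀ ha⟩
        · intro a ha
          rcases Finset.mem_union.1 ha with hl | hr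
          · obtain ⟨x, hx, hxact⟩ := hAvail _ (Finset.mem_filter.1 hl).2
            rw [Hact] at hxact
            obtain ⟨s, hsx, has, -⟩ := mem_cAct_orig M R B x a hxact
            exact ⟨s, hmemR₀ x hx s hsx, has⟩
          · obtain ⟨x, hx, hxr⟩ := Finset.mem_biUnion.1 hr
            obtain ⟨x1, hv⟩ := x
            rcases x1 with (s1 | j) | b
            · simp [repB] at hxr
            · obtain ⟨t, htR, hta⟩ := (hMEC j).1.2.2.1 a hxr
              exact ⟨t, hmemR₀ _ hx t htR, hta⟩
            · simp [repB] at hxr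
        · intro s hs a ha hact s' hP'
          rcases Finset.mem_union.1 ha with hl | hr
          · have haBc : Sum.inl (Sum.inl a) ∈ Bc := (Finset.mem_filter.1 hl).2
            obtain ⟨x, hx, hxact⟩ := hAvail _ haBc
            have hst : M.stOf a = s := M.stOf_spec s a hact
            by_cases hj : ∃ j, s' ∈ R j
            · obtain ⟨j, hjm⟩ := hj
              have hPy : 0 < Mc.P x (Sum.inl (Sum.inl a)) (repV R j) := by
                rw [HP, cP_orig_eq, hst]
                exact Finset.sum_pos' (fun t _ => M.P_nonneg _ _ _) ⟨s', hjm, hP'⟩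
              exact hmemR₀ _ (hClose x hx _ haBc hxact _ hPy) s' hjm
            · have hval : Valid R (Sum.inl (Sum.inl s')) := by
                intro t htq i hti
                simp only [Sum.inl.injEq] at htq
                exact hj ⟨i, htq ▸ hti⟩
              have hPy : 0 < Mc.P x (Sum.inl (Sum.inl a)) ⟨Sum.inl (Sum.inl s'), hval⟩ := by
                rw [HP, cP_orig_eq, hst]
                simpa using hP'
              exact hmemR₀ _ (hClose x hx _ haBc hxact _ hPy) s'
                (Finset.mem_singleton_self s')
          · obtain ⟨x, hx, hxr⟩ := Finset.mem_biUnion.1 hr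
            obtain ⟨x1, hv⟩ := x
            rcases x1 with (s1 | j) | b
            · simp [repB] at hxr
            · obtain ⟨t, htR, hta⟩ := (hMEC j).1.2.2.1 a hxr
              have hts : s = t := by rw [← M.stOf_spec s a hact, M.stOf_spec t a hta]
              subst hts
              exact hmemR₀ _ hx s' ((hMEC j).1.2.2.2.1 s htR a hxr hta s' hP')
            · simp [repB] at hxr
        · -- connectivity
          have key2 : ∀ x ∈ Rc, ∀ y, Relation.ReflTransGen (stepIn Mc.act Mc.P Rc Bc) x y →
              ∀ u ∈ statesOf R x.1, ∀ v ∈ statesOf R y.1,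
              Relation.ReflTransGen (stepIn M.act M.P R₀ B₀) u v := by
            intro x hx y hxy
            induction hxy with
            | refl => exact fun u hu v hv => hA x hx u hu v hv
            | @tail b c h1 h2 ih =>
              intro u hu v hv
              obtain ⟨w, hw⟩ := hSNE b h2.1
              exact (ih u hu w hw).trans (hB b c h2 w hw v hv)
          intro s hs s' hs'
          obtain ⟨x, hx, hsx⟩ := Finset.mem_biUnion.1 hs
          obtain ⟨x', hx', hsx'⟩ := Finset.mem_biUnion.1 hs'
          exact key2 x hx x' (hConn x hx x' hx') s hsx s' hsx'
      -- extend to a MEC and identify it with some collapsed MEC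
      obtain ⟨Rm, Bm, hMm, hRsub, hBsub⟩ := exists_mec_superset M.act M.P R₀ B₀ hEC₀
      obtain ⟨i, hRi, hBi⟩ := hall Rm Bm hMm
      have hR₀i : R₀ ⊆ R i := by rw [hRi]; exact hRsub
      have hxall : ∀ x ∈ Rc, x = repV R i := by
        rintro ⟨x1, hv⟩ hx
        rcases x1 with (s | j) | b
        · exact absurd (hR₀i (hmemR₀ _ hx s (Finset.mem_singleton_self s))) (hv s rfl i)
        · have hsub : R j ⊆ R i := fun t ht => hR₀i (hmemR₀ _ hx t ht)
          obtain ⟨t, ht⟩ := (hMEC j).1.1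
          have hji : j = i := by
            by_contra hne
            exact Finset.disjoint_left.1 (hdisj j i hne) ht (hsub ht)
          subst hji
          rfl
        · exact absurd hx (fun h => hT ⟨b, h⟩)
      have hRcEq : Rc = {repV R i} := by
        obtain ⟨x, hx⟩ := hRne
        exact Finset.eq_singleton_iff_unique_mem.2 ⟨(hxall x hx) ▸ hx, hxall⟩
      have hrepRc : repV R i ∈ Rc := by rw [hRcEq]; exact Finset.mem_singleton_self _
      have hR₀eq : R i ⊆ R₀ := fun t ht => hmemR₀ _ hrepRc t ht
      have hBi₀ : B i ⊆ B₀ := fun a ha => hmemB₀r i hrepRc a ha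
      obtain ⟨-, hBeq⟩ := (hMEC i).2 R₀ B₀ hEC₀ hR₀eq hBi₀
      obtain ⟨a, haBc⟩ := hBne
      obtain ⟨a₀, rfl⟩ := hBorig a haBc
      obtain ⟨x, hx, hxact⟩ := hAvail _ haBc
      rw [hxall x hx, Hact] at hxact
      obtain ⟨s, hsx, has, hnB⟩ := mem_cAct_orig M R B (repV R i) a₀ hxact
      exact (hnB i rfl) (hBeq ▸ hmemB₀l a₀ haBc)
  -- the two terminal pairs are end components
  have hTermEC : ∀ b : Bool, IsEC Mc.act Mc.P {term R b} {(Sum.inr b : CA A n)} := by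
    intro b
    refine ⟨⟨_, Finset.mem_singleton_self _⟩, ⟨_, Finset.mem_singleton_self _⟩, ?_, ?_, ?_⟩
    · intro a ha
      rw [Finset.mem_singleton] at ha
      subst ha
      refine ⟨term R b, Finset.mem_singleton_self _, ?_⟩
      rw [Hact, cAct_term_eq]
      exact Finset.mem_singleton_self _
    · intro s hs a ha hact y hP
      rw [Finset.mem_singleton] at hs ha
      subst hs; subst ha
      rw [HP, cP_inr_eq] at hP
      by_contra hne
      rw [Finset.mem_singleton] at hne
      rw [if_neg hne] at hP
      exact lt_irrefl 0 hP
    · intro s hs s' hs'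
      rw [Finset.mem_singleton] at hs hs'
      subst hs; subst hs'
      exact Relation.ReflTransGen.refl
  have hTermMEC : ∀ b : Bool, IsMEC Mc.act Mc.P {term R b} {(Sum.inr b : CA A n)} := by
    intro b
    refine ⟨hTermEC b, ?_⟩
    intro R' B' hEC' hR hB
    have hb : term R b ∈ R' := hR (Finset.mem_singleton_self _)
    rcases key R' B' hEC' with ⟨h1, h2⟩ | ⟨h1, h2⟩
    · rw [h1, Finset.mem_singleton] at hb
      have hbe : b = true := by
        have := congrArg Subtype.val hb
        simpa [term] using this
      subst hbe
      exact ⟨h1.symm, h2.symm⟩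
    · rw [h1, Finset.mem_singleton] at hb
      have hbe : b = false := by
        have := congrArg Subtype.val hb
        simpa [term] using this
      subst hbe
      exact ⟨h1.symm, h2.symm⟩
  refine ⟨fun Rc Bc => ⟨fun h => key Rc Bc h.1, fun h => ?_⟩, fun Rc Bc h => key Rc Bc h⟩
  rcases h with ⟨rfl, rfl⟩ | ⟨rfl, rfl⟩
  · exact hTermMEC true
  · exact hTermMEC false
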